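/- For finite relational structures A and B the following are equivalent: (i) every positive equality-free first-order sentence true in A is true in B; (ii) there exists a surjective hypermorphism from A to B; (iii) B ⊨ θ_{A,|B|}. -/

import Mathlib

/-- A relational signature: a type of relation symbols with arities. -/
structure Signature where
  symb : Type
  ar : symb → ℕ

/-- A relational structure over signature `σ` with domain `α`. -/
structure Struc (σ : Signature) (α : Type) where
  rel : ∀ s, (Fin (σ.ar s) → α) → Prop

/-- A homomorphism between relational structures. -/
def IsHom {σ : Signature} {α β : Type} (A : Struc σ α) (B : Struc σ β)
    (h : α → β) : Prop :=
  ∀ s t, A.rel s t → B.rel s (fun i => h (t i))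

/-- Positive equality-free first-order formulas (relational atoms, ∧, ∨ — including
the empty conjunction `top` and empty disjunction `bot` — ∃ and ∀), `n` free variables. -/
inductive PEF (σ : Signature) : ℕ → Type
  | top {n} : PEF σ n
  | bot {n} : PEF σ n
  | atom {n} (s : σ.symb) (ts : Fin (σ.ar s) → Fin n) : PEF σ n
  | and {n} : PEF σ n → PEF σ n → PEF σ n
  | or {n} : PEF σ n → PEF σ n → PEF σ n
  | ex {n} : PEF σ (n + 1) → PEF σ n
  | all {n} : PEF σ (n + 1) → PEF σ n

/-- Satisfaction of a positive equality-free formula under a valuation. -/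
def PEF.Sat {σ : Signature} {α : Type} (A : Struc σ α) :
    ∀ {n}, PEF σ n → (Fin n → α) → Prop
  | _, .top, _ => True
  | _, .bot, _ => False
  | _, .atom s ts, v => A.rel s (fun i => v (ts i))
  | _, .and φ ψ, v => φ.Sat A v ∧ ψ.Sat A v
  | _, .or φ ψ, v => φ.Sat A v ∨ ψ.Sat A v
  | _, .ex φ, v => ∃ a, φ.Sat A (Fin.cons a v)
  | _, .all φ, v => ∀ a, φ.Sat A (Fin.cons a v)

/-- A surjective hypermorphism from `A` to `B`: a total, surjective, preserving
multivalued map from the domain of `A` to subsets of the domain of `B`. -/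
structure SurjHyper {σ : Signature} {α β : Type} (A : Struc σ α) (B : Struc σ β)
    (f : α → Set β) : Prop where
  total : ∀ a, (f a).Nonempty
  surj : ∀ b, ∃ a, b ∈ f a
  pres : ∀ s (t : Fin (σ.ar s) → α) (u : Fin (σ.ar s) → β),
    A.rel s t → (∀ i, u i ∈ f (t i)) → B.rel s u

/-- Conjunction of a list of formulas. -/
def PEF.conjList {σ : Signature} {n : ℕ} : List (PEF σ n) → PEF σ n
  | [] => .top
  | φ :: l => .and φ (conjList l)

/-- Disjunction of a list of formulas. -/
def PEF.orList {σ : Signature} {n : ℕ} : List (PEF σ n) → PEF σ n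
  | [] => .bot
  | φ :: l => .or φ (orList l)

/-- Existentially quantify the `m` innermost variables. -/
def PEF.exs {σ : Signature} : ∀ {k m : ℕ}, PEF σ (k + m) → PEF σ k
  | _, 0, φ => φ
  | _, m + 1, φ => PEF.exs (m := m) φ.ex

/-- Universally quantify the `m` innermost variables. -/
def PEF.alls {σ : Signature} : ∀ {k m : ℕ}, PEF σ (k + m) → PEF σ k
  | _, 0, φ => φ
  | _, m + 1, φ => PEF.alls (m := m) φ.all

/-- The conjunction of all atoms expressing the positive facts of `A` on the tuple
of elements `g` (the diagram formula `φ_{A(g)}`). -/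
noncomputable def diagram {σ : Signature} [Fintype σ.symb] [DecidableEq σ.symb]
    {α : Type} [Fintype α] [DecidableEq α]
    (A : Struc σ α) [∀ s t, Decidable (A.rel s t)] {k : ℕ} (g : Fin k → α) :
    PEF σ k :=
  PEF.conjList
    (((Finset.univ.filter
        (fun p : Σ s : σ.symb, Fin (σ.ar s) → Fin k =>
          A.rel p.1 (fun i => g (p.2 i)))).toList).map
      (fun p => PEF.atom p.1 p.2))

/-- The canonical positive equality-free sentence
`θ_{A,m} = ∃v̄ (φ_{A(r̄)}(v̄) ∧ ∀w̄ ⋁_{t̄ ∈ A^m} φ_{A(r̄,t̄)}(v̄,w̄))`,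
where `r̄` enumerates the elements of `A` via `e`. -/
noncomputable def theta {σ : Signature} [Fintype σ.symb] [DecidableEq σ.symb]
    {α : Type} [Fintype α] [DecidableEq α]
    (A : Struc σ α) [∀ s t, Decidable (A.rel s t)]
    (n : ℕ) (e : α ≃ Fin n) (m : ℕ) : PEF σ 0 :=
  PEF.exs (k := 0) (m := n) (PEF.and
    (diagram A (fun i : Fin (0 + n) => e.symm ⟨(i : ℕ), by have := i.isLt; omega⟩))
    (PEF.alls (k := 0 + n) (m := m)
      (PEF.orList ((Finset.univ : Finset (Fin m → α)).toList.map (fun t =>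
        diagram A (fun j : Fin ((0 + n) + m) =>
          if h : (j : ℕ) < m then t ⟨(j : ℕ), h⟩
          else e.symm ⟨(j : ℕ) - m, by have := j.isLt; omega⟩))))))

section Helpers

variable {σ : Signature} {γ : Type}

lemma sat_conjList (C : Struc σ γ) {n : ℕ} (l : List (PEF σ n)) (v : Fin n → γ) :
    (PEF.conjList l).Sat C v ↔ ∀ φ ∈ l, φ.Sat C v := by
  induction l with
  | nil => simp [PEF.conjList, PEF.Sat]
  | cons φ l ih => simp [PEF.conjList, PEF.Sat, ih]

lemma sat_orList (C : Struc σ γ) {n : ℕ} (l : List (PEF σ n)) (v : Fin n → γ) :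
    (PEF.orList l).Sat C v ↔ ∃ φ ∈ l, φ.Sat C v := by
  induction l with
  | nil => simp [PEF.orList, PEF.Sat]
  | cons φ l ih => simp [PEF.orList, PEF.Sat, ih]

/-- Extend a valuation on the outer `k` variables by values for the `m` innermost ones. -/
def valExt {k m : ℕ} (v : Fin k → γ) (u : Fin m → γ) : Fin (k + m) → γ :=
  fun j => if h : (j : ℕ) < m then u ⟨(j : ℕ), h⟩
    else v ⟨(j : ℕ) - m, by have := j.isLt; omega⟩

lemma valExt_zero {k : ℕ} (v : Fin k → γ) (u : Fin 0 → γ) : valExt v u = v := by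
  funext j; simp [valExt]

lemma cons_valExt {k m : ℕ} (v : Fin k → γ) (u : Fin m → γ) (a : γ) :
    Fin.cons a (valExt v u) = valExt v (Fin.cons a u) := by
  funext j
  refine Fin.cases ?_ ?_ j
  · simp [valExt]
  · intro i
    simp only [Fin.cons_succ]
    by_cases h : (i : ℕ) < m
    · have h' : ((i.succ : Fin (k + m + 1)) : ℕ) < m + 1 := by
        simp [Fin.val_succ]; omega
      rw [valExt, valExt]
      rw [dif_pos h, dif_pos h']
      have : (⟨((i.succ : Fin (k + m + 1)) : ℕ), h'⟩ : Fin (m + 1)) =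
          Fin.succ ⟨(i : ℕ), h⟩ := by
        ext; simp [Fin.val_succ]
      rw [this, Fin.cons_succ]
    · have h' : ¬ ((i.succ : Fin (k + m + 1)) : ℕ) < m + 1 := by
        simp [Fin.val_succ]; omega
      rw [valExt, valExt, dif_neg h, dif_neg h']
      congr 1
      ext
      simp only [Fin.val_succ]
      omega

lemma sat_exs (C : Struc σ γ) :
    ∀ {m k : ℕ} (φ : PEF σ (k + m)) (v : Fin k → γ),
    (PEF.exs φ).Sat C v ↔ ∃ u : Fin m → γ, φ.Sat C (valExt v u) := by
  intro m
  induction m with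
  | zero =>
    intro k φ v
    show φ.Sat C v ↔ _
    constructor
    · intro h; exact ⟨Fin.elim0, by rwa [valExt_zero]⟩
    · rintro ⟨u, h⟩; rwa [valExt_zero] at h
  | succ m ih =>
    intro k φ v
    show (PEF.exs (m := m) φ.ex).Sat C v ↔ _
    rw [ih]
    constructor
    · rintro ⟨u, a, h⟩
      exact ⟨Fin.cons a u, by rwa [cons_valExt] at h⟩
    · rintro ⟨u, h⟩
      refine ⟨Fin.tail u, u 0, ?_⟩
      rw [cons_valExt, Fin.cons_self_tail]
      exact h

lemma sat_alls (C : Struc σ γ) :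
    ∀ {m k : ℕ} (φ : PEF σ (k + m)) (v : Fin k → γ),
    (PEF.alls φ).Sat C v ↔ ∀ u : Fin m → γ, φ.Sat C (valExt v u) := by
  intro m
  induction m with
  | zero =>
    intro k φ v
    show φ.Sat C v ↔ _
    constructor
    · intro h u; rwa [valExt_zero]
    · intro h; have := h Fin.elim0; rwa [valExt_zero] at this
  | succ m ih =>
    intro k φ v
    show (PEF.alls (m := m) φ.all).Sat C v ↔ _
    rw [ih]
    constructor
    · intro h u
      have := h (Fin.tail u) (u 0)
      rwa [cons_valExt, Fin.cons_self_tail] at this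
    · intro h u a
      have := h (Fin.cons a u)
      rwa [cons_valExt]

lemma sat_diagram {σ : Signature} [Fintype σ.symb] [DecidableEq σ.symb]
    {α : Type} [Fintype α] [DecidableEq α]
    (A : Struc σ α) [∀ s t, Decidable (A.rel s t)] {β : Type} (B : Struc σ β)
    {k : ℕ} (g : Fin k → α) (v : Fin k → β) :
    (diagram A g).Sat B v ↔ ∀ s (h : Fin (σ.ar s) → Fin k),
      A.rel s (fun i => g (h i)) → B.rel s (fun i => v (h i)) := by
  unfold diagram
  rw [sat_conjList]
  constructor
  · intro H s h hA
    exact H (PEF.atom s h) (by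
      simp only [List.mem_map, Finset.mem_toList, Finset.mem_filter, Finset.mem_univ,
        true_and]
      exact ⟨⟨s, h⟩, hA, rfl⟩)
  · intro H φ hφ
    simp only [List.mem_map, Finset.mem_toList, Finset.mem_filter, Finset.mem_univ,
      true_and] at hφ
    obtain ⟨⟨s, h⟩, hA, rfl⟩ := hφ
    exact H s h hA

lemma hyper_preserves {α β : Type} (A : Struc σ α) (B : Struc σ β) (f : α → Set β)
    (hf : SurjHyper A B f) : ∀ {n : ℕ} (φ : PEF σ n) (v : Fin n → α) (w : Fin n → β),
    (∀ i, w i ∈ f (v i)) → φ.Sat A v → φ.Sat B w := by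
  intro n φ
  induction φ with
  | top => intro _ _ _ _; trivial
  | bot => intro _ _ _ h; exact h.elim
  | atom s ts =>
    intro v w hw hA
    exact hf.pres s (fun i => v (ts i)) _ hA (fun i => hw (ts i))
  | and φ ψ ihφ ihψ => intro v w hw h; exact ⟨ihφ v w hw h.1, ihψ v w hw h.2⟩
  | or φ ψ ihφ ihψ =>
    intro v w hw h
    rcases h with h | h
    · exact Or.inl (ihφ v w hw h)
    · exact Or.inr (ihψ v w hw h)
  | ex φ ih =>
    intro v w hw h
    obtain ⟨a, ha⟩ := h
    obtain ⟨b, hb⟩ := hf.total a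
    refine ⟨b, ih (Fin.cons a v) (Fin.cons b w) ?_ ha⟩
    intro i
    refine Fin.cases ?_ ?_ i
    · simpa using hb
    · intro j; simpa using hw j
  | all φ ih =>
    intro v w hw h b
    obtain ⟨a, hb⟩ := hf.surj b
    refine ih (Fin.cons a v) (Fin.cons b w) ?_ (h a)
    intro i
    refine Fin.cases ?_ ?_ i
    · simpa using hb
    · intro j; simpa using hw j

lemma sat_theta_self {σ : Signature} [Fintype σ.symb] [DecidableEq σ.symb]
    {α : Type} [Fintype α] [DecidableEq α]
    (A : Struc σ α) [∀ s t, Decidable (A.rel s t)]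
    (n : ℕ) (e : α ≃ Fin n) (m : ℕ) :
    (theta A n e m).Sat A Fin.elim0 := by
  unfold theta
  rw [sat_exs]
  refine ⟨fun i => e.symm i, ?_, ?_⟩
  · rw [sat_diagram]
    intro s h hA
    have hg : (fun i => valExt Fin.elim0 (fun i => e.symm i) (h i)) =
        (fun i => e.symm ⟨((h i : Fin (0 + n)) : ℕ), by have := (h i).isLt; omega⟩) := by
      funext i
      have hlt : ((h i : Fin (0 + n)) : ℕ) < n := by have := (h i).isLt; omega
      simp [valExt, hlt]
    rw [hg]
    exact hA
  · rw [sat_alls]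
    intro u
    rw [sat_orList]
    refine ⟨_, List.mem_map.mpr ⟨u, Finset.mem_toList.mpr (Finset.mem_univ _), rfl⟩, ?_⟩
    rw [sat_diagram]
    intro s h hA
    have hg : (fun i => valExt (valExt Fin.elim0 (fun i => e.symm i)) u (h i)) =
        (fun i => if hh : ((h i : Fin ((0 + n) + m)) : ℕ) < m then u ⟨((h i : Fin ((0 + n) + m)) : ℕ), hh⟩
          else e.symm ⟨((h i : Fin ((0 + n) + m)) : ℕ) - m, by have := (h i).isLt; omega⟩) := by
      funext i
      by_cases hh : ((h i : Fin ((0 + n) + m)) : ℕ) < m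
      · simp [valExt, hh]
      · have hlt : ((h i : Fin ((0 + n) + m)) : ℕ) - m < n := by have := (h i).isLt; omega
        simp [valExt, hh, hlt]
    rw [hg]
    exact hA

lemma theta_to_hyper {σ : Signature} [Fintype σ.symb] [DecidableEq σ.symb]
    {α β : Type} [Fintype α] [DecidableEq α]
    (A : Struc σ α) (B : Struc σ β) [∀ s t, Decidable (A.rel s t)]
    (n : ℕ) (e : α ≃ Fin n) (m : ℕ) (eb : β ≃ Fin m)
    (h : (theta A n e m).Sat B Fin.elim0) : ∃ f : α → Set β, SurjHyper A B f := by
  classical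
  unfold theta at h
  rw [sat_exs] at h
  obtain ⟨vfun, hdiag, halls⟩ := h
  rw [sat_alls] at halls
  have hw := halls (fun j => eb.symm j)
  rw [sat_orList] at hw
  obtain ⟨φ, hmem, hφ⟩ := hw
  simp only [List.mem_map, Finset.mem_toList, Finset.mem_univ, true_and] at hmem
  obtain ⟨t, -, rfl⟩ := hmem
  rw [sat_diagram] at hφ
  set W : Fin ((0 + n) + m) → β :=
    valExt (valExt Fin.elim0 vfun) (fun j => eb.symm j) with hWdef
  set G : Fin ((0 + n) + m) → α := fun j =>
    if hj : (j : ℕ) < m then t ⟨(j : ℕ), hj⟩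
    else e.symm ⟨(j : ℕ) - m, by have := j.isLt; omega⟩ with hGdef
  -- index of b in the inner (universal) block
  have hblt : ∀ b : β, ((eb b : Fin m) : ℕ) < (0 + n) + m := by
    intro b; have := (eb b).isLt; omega
  have halt : ∀ a : α, m + ((e a : Fin n) : ℕ) < (0 + n) + m := by
    intro a; have := (e a).isLt; omega
  set jb : β → Fin ((0 + n) + m) := fun b => ⟨(eb b : ℕ), hblt b⟩ with hjb
  set ja : α → Fin ((0 + n) + m) := fun a => ⟨m + (e a : ℕ), halt a⟩ with hja
  have hWb : ∀ b : β, W (jb b) = b := by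
    intro b
    have hlt : ((jb b : Fin ((0 + n) + m)) : ℕ) < m := (eb b).isLt
    simp only [hWdef, valExt, hjb, dif_pos hlt]
    simp
  have hGb : ∀ b : β, G (jb b) = t (eb b) := by
    intro b
    have hlt : ((jb b : Fin ((0 + n) + m)) : ℕ) < m := (eb b).isLt
    simp only [hGdef, hjb, dif_pos hlt]
    rw [dif_pos (eb b).isLt]
  have hWa : ∀ a : α, W (ja a) = vfun (e a) := by
    intro a
    have hlt : ¬ ((ja a : Fin ((0 + n) + m)) : ℕ) < m := by simp [hja]
    have hlt2 : m + (e a : ℕ) - m < n := by have := (e a).isLt; omega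
    simp only [hWdef, valExt, hja, dif_neg hlt]
    have hlt3 : m + (e a : ℕ) - m < n := hlt2
    rw [dif_neg (by omega : ¬ m + (e a : ℕ) < m)]
    rw [dif_pos]
    · congr 1; ext; simp
    · simp
  have hGa : ∀ a : α, G (ja a) = a := by
    intro a
    have hlt : ¬ ((ja a : Fin ((0 + n) + m)) : ℕ) < m := by simp [hja]
    simp only [hGdef, hja, dif_neg hlt]
    have : (⟨m + (e a : ℕ) - m, by have := (e a).isLt; omega⟩ : Fin n) = e a := by
      ext; simp
    rw [dif_neg (by omega : ¬ m + (e a : ℕ) < m)]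
    rw [this, Equiv.symm_apply_apply]
  refine ⟨fun a => {b | b = vfun (e a) ∨ t (eb b) = a}, ?_, ?_, ?_⟩
  · intro a; exact ⟨vfun (e a), Or.inl rfl⟩
  · intro b; exact ⟨t (eb b), Or.inr rfl⟩
  · intro s ta u hrel hu
    set hidx : Fin (σ.ar s) → Fin ((0 + n) + m) := fun i =>
      if t (eb (u i)) = ta i then jb (u i) else ja (ta i) with hhidx
    have hG : ∀ i, G (hidx i) = ta i := by
      intro i
      simp only [hhidx]
      split_ifs with hc
      · rw [hGb, hc]
      · exact hGa (ta i)
    have hWi : ∀ i, W (hidx i) = u i := by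
      intro i
      simp only [hhidx]
      split_ifs with hc
      · exact hWb (u i)
      · rcases hu i with h1 | h1
        · rw [hWa, h1]
        · exact absurd h1 hc
    have h1 : A.rel s (fun i => G (hidx i)) := by
      have : (fun i => G (hidx i)) = ta := funext hG
      rw [this]; exact hrel
    have h2 := hφ s hidx h1
    have : (fun i => W (hidx i)) = u := funext hWi
    rwa [this] at h2

end Helpers

/-- For finite structures `A` and `B`, the following are
equivalent: (i) every positive equality-free sentence true in `A` is true in `B`;
(ii) there is a surjective hypermorphism from `A` to `B`; (iii) `B ⊨ θ_{A,|B|}`. -/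
theorem pef_containment_tfae {σ : Signature} [Fintype σ.symb] [DecidableEq σ.symb]
    {α β : Type} [Fintype α] [DecidableEq α] [Fintype β]
    (A : Struc σ α) (B : Struc σ β) [∀ s t, Decidable (A.rel s t)]
    (n : ℕ) (e : α ≃ Fin n) :
    ((∀ φ : PEF σ 0, φ.Sat A Fin.elim0 → φ.Sat B Fin.elim0) ↔
      (∃ f : α → Set β, SurjHyper A B f)) ∧
    ((∃ f : α → Set β, SurjHyper A B f) ↔
      (theta A n e (Fintype.card β)).Sat B Fin.elim0) := by
  have h21 : (∃ f : α → Set β, SurjHyper A B f) →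
      (∀ φ : PEF σ 0, φ.Sat A Fin.elim0 → φ.Sat B Fin.elim0) := by
    rintro ⟨f, hf⟩ φ h
    exact hyper_preserves A B f hf φ Fin.elim0 Fin.elim0 (fun i => i.elim0) h
  have h13 : (∀ φ : PEF σ 0, φ.Sat A Fin.elim0 → φ.Sat B Fin.elim0) →
      (theta A n e (Fintype.card β)).Sat B Fin.elim0 :=
    fun H => H _ (sat_theta_self A n e (Fintype.card β))
  have h32 : (theta A n e (Fintype.card β)).Sat B Fin.elim0 →
      ∃ f : α → Set β, SurjHyper A B f :=
    fun h => theta_to_hyper A B n e (Fintype.card β) (Fintype.equivFin β) h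
  exact ⟨⟨fun h => h32 (h13 h), h21⟩, ⟨fun h => h13 (h21 h), h32⟩⟩
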